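/- Let n be a nonzero integer that is not a perfect square and let {a₁, …, a_m} be a Diophantine m-tuple with the property D(n) such that gcd(a₁, …, a_m) = 1. Then {a₁, …, a_m} is a norm tuple: each aᵢ is the norm of a nonzero integral ideal of ℚ(√n). -/

import Mathlib

open NumberField Module Ideal

section Aux

lemma aux_exists_prime_cast_mem {R : Type*} [CommRing R] {P : Ideal R} (hP : P.IsPrime)
    (t : ℕ) (ht : t ≠ 0) (htm : (t : R) ∈ P) : ∃ q : ℕ, q.Prime ∧ (q : R) ∈ P := by
  induction t using Nat.strong_induction_on with
  | _ t IH =>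
    rcases eq_or_ne t 1 with rfl | ht1
    · exact absurd ((Ideal.eq_top_iff_one P).mpr (by simpa using htm)) hP.ne_top
    · have hp := Nat.minFac_prime ht1
      obtain ⟨u, hu⟩ := Nat.minFac_dvd t
      have hm : ((t.minFac * u : ℕ) : R) ∈ P := by rw [← hu]; exact htm
      rw [Nat.cast_mul] at hm
      rcases hP.mem_or_mem hm with h | h
      · exact ⟨t.minFac, hp, h⟩
      · have hu0 : u ≠ 0 := by rintro rfl; omega
        have hlt : u < t := by
          rw [hu]; exact lt_mul_left (Nat.pos_of_ne_zero hu0) hp.one_lt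
        exact IH u hlt hu0 h

variable {S : Type*} [CommRing S] [IsDomain S] [IsDedekindDomain S] [CharZero S]
  [Infinite S] [Module.Free ℤ S] [Module.Finite ℤ S]

omit [IsDomain S] [Infinite S] in
/-- Norm of a principal ideal generated by an integer. -/
lemma aux_absNorm_span_natCast (hrank : finrank ℤ S = 2) (q : ℕ) :
    absNorm (Ideal.span {(q : S)}) = q ^ 2 := by
  rw [absNorm_span_singleton]
  have : (q : S) = algebraMap ℤ S (q : ℤ) := by simp
  rw [this]
  have b := Module.Free.chooseBasis ℤ S
  rw [Algebra.norm_algebraMap_of_basis b, ← Module.finrank_eq_card_chooseBasisIndex, hrank]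
  simp [Int.natAbs_pow]

/-- Parity: if there is no ideal of norm `p`, every norm has even `p`-valuation. -/
lemma aux_parity (hrank : finrank ℤ S = 2) (p : ℕ) (hp : p.Prime)
    (hQ : ¬ ∃ 𝔠 : Ideal S, 𝔠 ≠ ⊥ ∧ absNorm 𝔠 = p)
    (t : ℕ) (𝔞 : Ideal S) (h𝔞 : 𝔞 ≠ ⊥) (hN : absNorm 𝔞 = t) :
    Even (t.factorization p) := by
  induction t using Nat.strong_induction_on generalizing 𝔞 with
  | _ t IH =>
    rcases eq_or_ne 𝔞 ⊤ with rfl | htop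
    · rw [absNorm_top] at hN; simp [← hN]
    · obtain ⟨P, hPmax, hle⟩ := Ideal.exists_le_maximal 𝔞 htop
      have hPprime : P.IsPrime := hPmax.isPrime
      obtain ⟨𝔟, h𝔟⟩ := Ideal.dvd_iff_le.mpr hle
      have hPbot : P ≠ ⊥ := fun h => h𝔞 (by rw [← le_bot_iff, ← h]; exact hle)
      have h𝔟bot : 𝔟 ≠ ⊥ := by rintro rfl; rw [mul_bot] at h𝔟; exact h𝔞 h𝔟
      have hNP : absNorm P ≠ 0 := by rwa [ne_eq, absNorm_eq_zero_iff]
      have hNP1 : absNorm P ≠ 1 := by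
        rw [ne_eq, absNorm_eq_one_iff]; exact hPmax.ne_top
      obtain ⟨q, hq, hqP⟩ := aux_exists_prime_cast_mem hPprime (absNorm P) hNP (absNorm_mem P)
      have hPdvd : P ∣ Ideal.span {(q : S)} :=
        Ideal.dvd_iff_le.mpr ((Ideal.span_singleton_le_iff_mem P).mpr hqP)
      have hNdvd : absNorm P ∣ q ^ 2 := by
        rw [← aux_absNorm_span_natCast (S := S) hrank q]
        exact map_dvd absNorm hPdvd
      obtain ⟨k, hk2, hkeq⟩ := (Nat.dvd_prime_pow hq).mp hNdvd
      have hNPval : Even ((absNorm P).factorization p) := by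
        interval_cases k
        · simp [hkeq] at hNP1
        · have hqp : q ≠ p := by
            rintro rfl
            exact hQ ⟨P, hPbot, by rw [hkeq, pow_one]⟩
          rw [hkeq, pow_one, hq.factorization]
          simp [Finsupp.single_apply, hqp]
        · rw [hkeq, hq.factorization_pow]
          rcases eq_or_ne q p with rfl | hqp
          · simp [Finsupp.single_apply]
          · simp [Finsupp.single_apply, hqp]
      have hN𝔟 : absNorm 𝔟 ≠ 0 := by rwa [ne_eq, absNorm_eq_zero_iff]
      have hmul : t = absNorm P * absNorm 𝔟 := by rw [← hN, h𝔟, _root_.map_mul]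
      have hlt : absNorm 𝔟 < t := by
        rw [hmul]
        have h2 : 2 ≤ absNorm P := by omega
        calc absNorm 𝔟 < 2 * absNorm 𝔟 := by omega
        _ ≤ absNorm P * absNorm 𝔟 := Nat.mul_le_mul_right _ h2
      have hIH := IH (absNorm 𝔟) hlt 𝔟 h𝔟bot rfl
      rw [hmul, Nat.factorization_mul hNP hN𝔟]
      simpa using hNPval.add hIH

/-- Existence: a positive integer whose odd-valuation primes all admit an ideal
of that norm is itself a norm of a nonzero ideal. -/
lemma aux_exists (hrank : finrank ℤ S = 2) (t : ℕ) (ht : t ≠ 0)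
    (h : ∀ q : ℕ, q.Prime → Odd (t.factorization q) →
      ∃ 𝔠 : Ideal S, 𝔠 ≠ ⊥ ∧ absNorm 𝔠 = q) :
    ∃ 𝔞 : Ideal S, 𝔞 ≠ ⊥ ∧ absNorm 𝔞 = t := by
  induction t using Nat.strong_induction_on with
  | _ t IH =>
    rcases eq_or_ne t 1 with rfl | ht1
    · exact ⟨⊤, by simp, absNorm_top⟩
    have hp := Nat.minFac_prime ht1
    set p := t.minFac with hpdef
    set e := t.factorization p with hedef
    have he : 0 < e := by
      rw [hedef]
      exact (Nat.Prime.factorization_pos_of_dvd hp ht (Nat.minFac_dvd t))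
    set t' := t / p ^ e with ht'def
    have htt' : p ^ e * t' = t := Nat.ordProj_mul_ordCompl_eq_self t p
    have ht'0 : t' ≠ 0 := (Nat.ordCompl_pos p ht).ne'
    have ht'fact : t'.factorization = t.factorization.erase p := Nat.factorization_ordCompl t p
    have hpe1 : 1 < p ^ e := Nat.one_lt_pow he.ne' hp.one_lt
    have ht'lt : t' < t := by
      rw [← htt']
      calc t' < 2 * t' := by omega
      _ ≤ p ^ e * t' := Nat.mul_le_mul_right _ (by omega)
    obtain ⟨𝔟, h𝔟bot, h𝔟N⟩ := IH t' ht'lt ht'0 (fun q hq hodd => by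
      apply h q hq
      rcases eq_or_ne q p with rfl | hqp
      · rw [ht'fact] at hodd; simp at hodd
      · rwa [ht'fact, Finsupp.erase_ne hqp] at hodd)
    have hpe : ∃ 𝔠 : Ideal S, 𝔠 ≠ ⊥ ∧ absNorm 𝔠 = p ^ e := by
      rcases Nat.even_or_odd e with heven | hodd
      · obtain ⟨k, hk⟩ := heven
        refine ⟨(Ideal.span {(p : S)}) ^ k, ?_, ?_⟩
        · apply pow_ne_zero
          rw [ne_eq, Ideal.zero_eq_bot, Ideal.span_singleton_eq_bot]
          exact Nat.cast_ne_zero.mpr hp.ne_zero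
        · rw [map_pow, aux_absNorm_span_natCast (S := S) hrank, ← pow_mul, hk, two_mul]
      · obtain ⟨𝔠, h𝔠bot, h𝔠N⟩ := h p hp hodd
        exact ⟨𝔠 ^ e, pow_ne_zero _ h𝔠bot, by rw [map_pow, h𝔠N]⟩
    obtain ⟨𝔠, h𝔠bot, h𝔠N⟩ := hpe
    exact ⟨𝔠 * 𝔟, mul_ne_zero h𝔠bot h𝔟bot, by rw [_root_.map_mul, h𝔠N, h𝔟N, htt']⟩

lemma aux_norm {K : Type*} [Field K] [Algebra ℚ K] (hK : finrank ℚ K = 2)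
    (s : K) (hirr : ∀ q : ℚ, algebraMap ℚ K q ≠ s) (nq : ℚ)
    (hs : s ^ 2 = algebraMap ℚ K nq) (c : ℚ) :
    Algebra.norm ℚ (algebraMap ℚ K c + s) = c ^ 2 - nq := by
  have h1 : (1 : K) ≠ 0 := one_ne_zero
  have hli : LinearIndependent ℚ ![(1 : K), s] := by
    rw [LinearIndependent.pair_iff' h1]
    intro q hq
    exact hirr q (by rw [← hq, Algebra.smul_def, mul_one])
  have hcard : Fintype.card (Fin 2) = finrank ℚ K := by simp [hK]
  set b := basisOfLinearIndependentOfCardEqFinrank hli hcard with hbdef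
  have hb : ⇑b = ![(1 : K), s] := coe_basisOfLinearIndependentOfCardEqFinrank hli hcard
  have hb0 : b 0 = 1 := by rw [hb]; rfl
  have hb1 : b 1 = s := by rw [hb]; rfl
  have hrepr : ∀ (y : K) (c d : ℚ), y = c • b 0 + d • b 1 →
      b.repr y = Finsupp.single 0 c + Finsupp.single 1 d := by
    intro y c d hy
    rw [hy, map_add, map_smul, map_smul, b.repr_self, b.repr_self]
    ext i
    simp [Finsupp.single_apply]
  have e0 : (algebraMap ℚ K c + s) * b 0 = c • b 0 + (1 : ℚ) • b 1 := by
    rw [hb0, hb1, mul_one, one_smul, Algebra.smul_def, mul_one]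
  have e1 : (algebraMap ℚ K c + s) * b 1 = nq • b 0 + c • b 1 := by
    rw [hb0, hb1, add_mul, ← sq, hs, Algebra.smul_def, Algebra.smul_def, mul_one]
    ring
  have r0 := hrepr _ _ _ e0
  have r1 := hrepr _ _ _ e1
  rw [Algebra.norm_eq_matrix_det b, Matrix.det_fin_two,
    Algebra.leftMulMatrix_eq_repr_mul, Algebra.leftMulMatrix_eq_repr_mul,
    Algebra.leftMulMatrix_eq_repr_mul, Algebra.leftMulMatrix_eq_repr_mul,
    r0, r1]
  simp [Finsupp.single_apply]
  ring

end Aux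

/-- A Diophantine `m`-tuple with the property `D(n)` whose elements have
greatest common divisor `1` is a norm tuple: each `aᵢ` is the norm of a nonzero integral
ideal of `ℚ(√n)`. -/
theorem diophantine_tuple_coprime_is_norm_tuple
    (n : ℤ) (hn : n ≠ 0) (hnsq : ¬ IsSquare n)
    (K : Type*) [Field K] [NumberField K] (hK : finrank ℚ K = 2)
    (s : K) (hs : s ^ 2 = (n : K))
    (m : ℕ) (a : Fin m → ℕ) (hinj : Function.Injective a) (hpos : ∀ i, 0 < a i)
    (hD : ∀ i j, i ≠ j → ∃ r : ℤ, (a i : ℤ) * a j + n = r ^ 2)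
    (hgcd : Finset.univ.gcd a = 1) :
    ∀ i, ∃ 𝔞 : Ideal (𝓞 K), 𝔞 ≠ ⊥ ∧ Ideal.absNorm 𝔞 = a i := by
  have hrank : finrank ℤ (𝓞 K) = 2 := by rw [RingOfIntegers.rank]; exact hK
  -- `s` is not rational
  have hirr : ∀ q : ℚ, algebraMap ℚ K q ≠ s := by
    intro q hq
    have hq2 : q ^ 2 = (n : ℚ) := by
      apply (algebraMap ℚ K).injective
      rw [map_pow, hq, hs, map_intCast]
    have hint : IsIntegral ℤ q := by
      refine ⟨Polynomial.X ^ 2 - Polynomial.C n, Polynomial.monic_X_pow_sub_C n two_ne_zero, ?_⟩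
      simp only [Polynomial.eval₂_sub, Polynomial.eval₂_pow, Polynomial.eval₂_X,
        Polynomial.eval₂_C, map_sub, map_pow, Polynomial.aeval_X, Polynomial.aeval_C, hq2]
      simp
    obtain ⟨y, hy⟩ := IsIntegrallyClosed.isIntegral_iff.mp hint
    apply hnsq
    refine ⟨y, ?_⟩
    have : ((y * y : ℤ) : ℚ) = ((n : ℤ) : ℚ) := by
      push_cast
      rw [← sq, show (y:ℚ) = q from hy, hq2]
    exact_mod_cast this.symm
  have hs' : s ^ 2 = algebraMap ℚ K ((n : ℚ)) := by
    rw [hs, map_intCast]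
  -- `s` is integral, giving an element of `𝓞 K`
  have hsint : IsIntegral ℤ s := by
    refine ⟨Polynomial.X ^ 2 - Polynomial.C n, Polynomial.monic_X_pow_sub_C n two_ne_zero, ?_⟩
    simp only [Polynomial.eval₂_sub, Polynomial.eval₂_pow, Polynomial.eval₂_X,
      Polynomial.eval₂_C, map_sub, map_pow, Polynomial.aeval_X, Polynomial.aeval_C, hs]
    simp
  set σ : 𝓞 K := ⟨s, hsint⟩ with hσ
  intro i
  apply aux_exists hrank (a i) (hpos i).ne'
  intro p hp hodd
  by_contra hQ
  -- `p` divides `a i`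
  have hpi : p ∣ a i := by
    rw [Nat.Prime.dvd_iff_one_le_factorization hp (hpos i).ne']
    obtain ⟨k, hk⟩ := hodd; omega
  -- some `a j` is not divisible by `p`
  have hexj : ∃ j, ¬ p ∣ a j := by
    by_contra h'
    push_neg at h'
    have : p ∣ 1 := hgcd ▸ Finset.dvd_gcd (fun j _ => h' j)
    exact hp.ne_one (Nat.dvd_one.mp this)
  obtain ⟨j, hpj⟩ := hexj
  have hij : i ≠ j := by rintro rfl; exact hpj hpi
  obtain ⟨r, hr⟩ := hD i j hij
  -- the ideal generated by `r + √n`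
  set ξ : 𝓞 K := (r : 𝓞 K) + σ with hξ
  have hξK : (algebraMap (𝓞 K) K) ξ = algebraMap ℚ K ((r : ℚ)) + s := by
    rw [hξ, map_add]
    congr 1
    · push_cast; simp
  have hNξ : Algebra.norm ℤ ξ = (a i : ℤ) * a j := by
    have h1 : ((Algebra.norm ℤ ξ : ℤ) : ℚ) = Algebra.norm ℚ ((algebraMap (𝓞 K) K) ξ) :=
      Algebra.coe_norm_int ξ
    rw [hξK, aux_norm hK s hirr ((n : ℚ)) hs' ((r : ℚ))] at h1
    have h2 : ((r : ℚ)) ^ 2 - (n : ℚ) = (((a i : ℤ) * a j : ℤ) : ℚ) := by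
      have h3 : r ^ 2 - n = (a i : ℤ) * a j := by linarith [hr]
      exact_mod_cast congrArg (Int.cast : ℤ → ℚ) h3
    rw [h2] at h1
    exact_mod_cast h1
  have habs : absNorm (Ideal.span {ξ}) = a i * a j := by
    rw [absNorm_span_singleton, hNξ]
    push_cast
    simp [Int.natAbs_mul]
  have haij : a i * a j ≠ 0 := Nat.mul_ne_zero (hpos i).ne' (hpos j).ne'
  have hbot : Ideal.span {ξ} ≠ ⊥ := by
    intro hb
    rw [hb, absNorm_bot] at habs
    exact haij habs.symm
  have heven := aux_parity hrank p hp hQ (a i * a j) _ hbot habs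
  rw [Nat.factorization_mul (hpos i).ne' (hpos j).ne'] at heven
  have hzero : (a j).factorization p = 0 := Nat.factorization_eq_zero_of_not_dvd hpj
  rw [Finsupp.add_apply, hzero, add_zero] at heven
  exact (Nat.not_even_iff_odd.mpr hodd) heven
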